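/- Let X be a pre-Riesz space, let m ∈ ℕ, and let x₁, …, x_m ∈ X \ {0} be pairwise disjoint (x_i ⊥ x_j whenever i ≠ j). Then the tuple (x₁, …, x_m) is linearly independent over ℝ. -/

import Mathlib

set_option linter.unusedSectionVars false
set_option maxHeartbeats 1000000

open Pointwise

variable {X : Type*} [AddCommGroup X] [PartialOrder X] [IsOrderedAddMonoid X] [Module ℝ X]
  [PosSMulStrictMono ℝ X] [PosSMulReflectLT ℝ X]

/-- Two elements of an ordered vector space are disjoint if the sets `{x+y, -x-y}` and
`{x-y, y-x}` have the same set of upper bounds. -/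
def UDisjoint (x y : X) : Prop :=
  upperBounds ({x + y, -x - y} : Set X) = upperBounds ({x - y, y - x} : Set X)

/-- The disjoint complement `S^⊥` of a set `S`. -/
def dComp (S : Set X) : Set X := {x : X | ∀ s ∈ S, UDisjoint x s}

/-- A band: a set equal to its double disjoint complement. -/
def IsBand (B : Set X) : Prop := B = dComp (dComp B)

/-- A projection band: a band `B` with `B ∩ B^⊥ = {0}` and `B + B^⊥ = X`. -/
def IsProjBand (B : Set X) : Prop :=
  IsBand B ∧ B ∩ dComp B = {0} ∧ ∀ x : X, ∃ b ∈ B, ∃ c ∈ dComp B, x = b + c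

/-- A positive linear operator. -/
def IsPosMap (T : X →ₗ[ℝ] X) : Prop := ∀ x : X, 0 ≤ x → 0 ≤ T x

/-- A band projection: a linear projection whose range is a projection band and whose
kernel is the disjoint complement of the range. -/
def IsBandProj (P : X →ₗ[ℝ] X) : Prop :=
  P ∘ₗ P = P ∧ IsProjBand (Set.range ⇑P) ∧ (LinearMap.ker P : Set X) = dComp (Set.range ⇑P)

/-- A pre-Riesz space: for every nonempty finite `A ⊆ X` and every `x`, if the upper bounds
of `x + A` are contained in the upper bounds of `A`, then `x ≥ 0`. -/
def IsPreRiesz (X : Type*) [AddCommGroup X] [PartialOrder X] [IsOrderedAddMonoid X] [Module ℝ X]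
    [PosSMulStrictMono ℝ X] [PosSMulReflectLT ℝ X] : Prop :=
  ∀ (A : Set X) (x : X), A.Finite → A.Nonempty →
    upperBounds ((x + ·) '' A) ⊆ upperBounds A → 0 ≤ x

/-! ### Auxiliary lemmas -/

lemma mem_ub_pair {a b u : X} : u ∈ upperBounds ({a, b} : Set X) ↔ a ≤ u ∧ b ≤ u := by
  simp [upperBounds_insert, upperBounds_singleton, Set.mem_inter_iff, Set.mem_Ici]

lemma ud_zero (x : X) : UDisjoint x 0 := by
  unfold UDisjoint
  rw [add_zero, sub_zero, sub_zero, zero_sub]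

lemma ud_symm {x y : X} (h : UDisjoint x y) : UDisjoint y x := by
  unfold UDisjoint at h ⊢
  rw [show y + x = x + y by abel, show -y - x = -x - y by abel, h,
    Set.pair_comm (x - y) (y - x)]

lemma ud_neg_right {x y : X} (h : UDisjoint x y) : UDisjoint x (-y) := by
  unfold UDisjoint at h ⊢
  rw [show x + -y = x - y by abel, show -x - -y = y - x by abel,
    show x - -y = x + y by abel, show -y - x = -x - y by abel, h]

lemma ud_neg_left {x y : X} (h : UDisjoint x y) : UDisjoint (-x) y :=
  ud_symm (ud_neg_right (ud_symm h))

lemma ud_flip {x y : X} (h : UDisjoint x y) {a u : X}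
    (h1 : a + (x + y) ≤ u) (h2 : a - (x + y) ≤ u) :
    a + (x - y) ≤ u ∧ a + (y - x) ≤ u := by
  have h' : upperBounds ({x + y, -x - y} : Set X) = upperBounds ({x - y, y - x} : Set X) := h
  have hm : u - a ∈ upperBounds ({x + y, -x - y} : Set X) := by
    rw [mem_ub_pair]
    constructor
    · rw [le_sub_iff_add_le, add_comm]; exact h1
    · rw [le_sub_iff_add_le, show -x - y + a = a - (x + y) by abel]; exact h2
  rw [h', mem_ub_pair] at hm
  constructor
  · rw [← le_sub_iff_add_le']; exact hm.1
  · rw [← le_sub_iff_add_le']; exact hm.2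

lemma smul_le_iff' {s : ℝ} (hs : 0 < s) {w u : X} : s • w ≤ u ↔ w ≤ s⁻¹ • u := by
  constructor
  · intro h
    have := smul_le_smul_of_nonneg_left h (le_of_lt (inv_pos.mpr hs))
    rwa [inv_smul_smul₀ hs.ne'] at this
  · intro h
    have := smul_le_smul_of_nonneg_left h hs.le
    rwa [smul_inv_smul₀ hs.ne'] at this

lemma ud_smul_both {x y : X} {s : ℝ} (hs : 0 < s) (h : UDisjoint x y) :
    UDisjoint (s • x) (s • y) := by
  have h' : upperBounds ({x + y, -x - y} : Set X) = upperBounds ({x - y, y - x} : Set X) := h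
  show upperBounds _ = upperBounds _
  ext u
  rw [mem_ub_pair, mem_ub_pair,
      show s • x + s • y = s • (x + y) by module,
      show -(s • x) - s • y = s • (-x - y) by module,
      show s • x - s • y = s • (x - y) by module,
      show s • y - s • x = s • (y - x) by module,
      smul_le_iff' hs, smul_le_iff' hs, smul_le_iff' hs, smul_le_iff' hs]
  have h2 := Set.ext_iff.mp h' (s⁻¹ • u)
  rw [mem_ub_pair, mem_ub_pair] at h2
  exact h2

lemma key_smul (hX : IsPreRiesz X) {x y : X} (h : UDisjoint x y) {t : ℝ}
    (ht0 : 0 ≤ t) (ht1 : t ≤ 1) {u : X}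
    (h1 : x + t • y ≤ u) (h2 : -(x + t • y) ≤ u) : x - t • y ≤ u := by
  have key : (0:X) ≤ u - (x - t • y) := by
    apply hX ({x + y, -(x + y)} : Set X) (u - (x - t • y))
      ((Set.finite_singleton _).insert _) ⟨_, Set.mem_insert _ _⟩
    intro u' hu'
    set g := u - (x - t • y) with hg
    have c1 : g + (x + y) ≤ u' := hu' (by rw [Set.image_pair]; exact Set.mem_insert _ _)
    have c2 : g + -(x + y) ≤ u' := hu' (by rw [Set.image_pair]; exact Set.mem_insert_of_mem _ rfl)
    have c2' : g - (x + y) ≤ u' := by rwa [← sub_eq_add_neg] at c2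
    obtain ⟨d1, d2⟩ := ud_flip h c1 c2'
    rw [mem_ub_pair]
    constructor
    · have comb : (1 - t) • (g + (x + y)) + t • (g + (x - y)) ≤ (1 - t) • u' + t • u' :=
        add_le_add (smul_le_smul_of_nonneg_left c1 (by linarith))
          (smul_le_smul_of_nonneg_left d1 ht0)
      have e1 : (1 - t) • u' + t • u' = u' := by module
      have e2 : (1 - t) • (g + (x + y)) + t • (g + (x - y)) = u + (1 - t) • y := by
        rw [hg]; module
      have e3 : x + y ≤ u + (1 - t) • y := by
        have := add_le_add_left h1 ((1 - t) • y)
        rwa [show x + t • y + (1 - t) • y = x + y by module] at this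
      rw [e1, e2] at comb
      exact e3.trans comb
    · have e4 := add_le_add_left h2 (t • y - y)
      rw [show -(x + t • y) + (t • y - y) = -(x + y) by module] at e4
      have e6 : g + (x - y) = u + (t • y - y) := by rw [hg]; module
      rw [e6] at d1
      exact e4.trans d1
  rwa [sub_nonneg] at key

lemma key_add (hX : IsPreRiesz X) {x y z : X} (hxy : UDisjoint x y) (hxz : UDisjoint x z)
    {u : X} (h1 : x + y + z ≤ u) (h2 : -(x + y + z) ≤ u) : x - y - z ≤ u := by
  set A : Set X := {x + y + z, x + y - z, x - y + z, x - y - z,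
    -x + y + z, -x + y - z, -x - y + z, -x - y - z} with hA
  have key : (0:X) ≤ u - (x - y - z) := by
    apply hX A (u - (x - y - z))
    · rw [hA]
      exact (((((((Set.finite_singleton _).insert _).insert _).insert _).insert
        _).insert _).insert _).insert _
    · exact ⟨_, Set.mem_insert _ _⟩
    intro u' hu'
    set g := u - (x - y - z) with hg
    have mk : ∀ c ∈ A, g + c ≤ u' := fun c hc => hu' (Set.mem_image_of_mem _ hc)
    have H1 : g + (x + y + z) ≤ u' := mk _ (by rw [hA]; simp)
    have H2 : g + (x + y - z) ≤ u' := mk _ (by rw [hA]; simp)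
    have H3 : g + (x - y + z) ≤ u' := mk _ (by rw [hA]; simp)
    have H4 : g + (x - y - z) ≤ u' := mk _ (by rw [hA]; simp)
    have H8 : g + (-x - y - z) ≤ u' := mk _ (by rw [hA]; simp)
    have B0 : u ≤ u' := by rwa [show g + (x - y - z) = u by rw [hg]; abel] at H4
    have T1 : x + y + z ≤ u' := h1.trans B0
    have T8 : -x - y - z ≤ u' := by
      have := h2.trans B0; rwa [show -(x + y + z) = -x - y - z by abel] at this
    have T5 : -x + y + z ≤ u' := by
      rw [show g + (-x - y - z) = u - x - x by rw [hg]; abel] at H8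
      have t5 : -x + y + z ≤ u - x - x := by
        have := sub_le_sub_right (sub_le_sub_right h1 x) x
        rwa [show x + y + z - x - x = -x + y + z by abel] at this
      exact t5.trans H8
    have T6 : -x + y - z ≤ u' := by
      rw [show g + (x + y - z) = u + (y + y) by rw [hg]; abel] at H2
      have := add_le_add_left h2 (y + y)
      rw [show -(x + y + z) + (y + y) = -x + y - z by abel] at this
      exact this.trans H2
    have T7 : -x - y + z ≤ u' := by
      rw [show g + (x - y + z) = u + (z + z) by rw [hg]; abel] at H3
      have := add_le_add_left h2 (z + z)
      rw [show -(x + y + z) + (z + z) = -x - y + z by abel] at this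
      exact this.trans H3
    have T3 : x - y + z ≤ u' := by
      have p1 : z + (x + y) ≤ u' := by rwa [show z + (x + y) = x + y + z by abel]
      have p2 : z - (x + y) ≤ u' := by rwa [show z - (x + y) = -x - y + z by abel]
      have := (ud_flip hxy p1 p2).1
      rwa [show z + (x - y) = x - y + z by abel] at this
    have T2 : x + y - z ≤ u' := by
      have p1 : y + (x + z) ≤ u' := by rwa [show y + (x + z) = x + y + z by abel]
      have p2 : y - (x + z) ≤ u' := by rwa [show y - (x + z) = -x + y - z by abel]
      have := (ud_flip hxz p1 p2).1
      rwa [show y + (x - z) = x + y - z by abel] at this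
    have T4 : x - y - z ≤ u' := by
      have p1 : -z + (x + y) ≤ u' := by rwa [show -z + (x + y) = x + y - z by abel]
      have p2 : -z - (x + y) ≤ u' := by rwa [show -z - (x + y) = -x - y - z by abel]
      have := (ud_flip hxy p1 p2).1
      rwa [show -z + (x - y) = x - y - z by abel] at this
    intro v hv
    rw [hA] at hv
    simp only [Set.mem_insert_iff, Set.mem_singleton_iff] at hv
    rcases hv with rfl | rfl | rfl | rfl | rfl | rfl | rfl | rfl
    exacts [T1, T2, T3, T4, T5, T6, T7, T8]
  rwa [sub_nonneg] at key

lemma ud_add (hX : IsPreRiesz X) {x y z : X} (hxy : UDisjoint x y) (hxz : UDisjoint x z) :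
    UDisjoint x (y + z) := by
  have hnxy : UDisjoint (-x) y := ud_neg_left hxy
  have hnxz : UDisjoint (-x) z := ud_neg_left hxz
  have hxny : UDisjoint x (-y) := ud_neg_right hxy
  have hxnz : UDisjoint x (-z) := ud_neg_right hxz
  have hnxny : UDisjoint (-x) (-y) := ud_neg_left hxny
  have hnxnz : UDisjoint (-x) (-z) := ud_neg_left hxnz
  show upperBounds _ = upperBounds _
  ext u
  rw [mem_ub_pair, mem_ub_pair]
  constructor
  · rintro ⟨ha, hb⟩
    have ha' : x + y + z ≤ u := by rwa [show x + y + z = x + (y + z) by abel]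
    have hb' : -(x + y + z) ≤ u := by rwa [show -(x + y + z) = -x - (y + z) by abel]
    constructor
    · have := key_add hX hxy hxz ha' hb'
      rwa [show x - y - z = x - (y + z) by abel] at this
    · have p1 : -x + -y + -z ≤ u := by rwa [show -x + -y + -z = -(x + y + z) by abel]
      have p2 : -(-x + -y + -z) ≤ u := by rwa [show -(-x + -y + -z) = x + y + z by abel]
      have := key_add hX hnxny hnxnz p1 p2
      rwa [show -x - -y - -z = y + z - x by abel] at this
  · rintro ⟨ha, hb⟩
    -- ha : x - (y+z) ≤ u, hb : (y+z) - x ≤ u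
    constructor
    · have p1 : x + -y + -z ≤ u := by rwa [show x + -y + -z = x - (y + z) by abel]
      have p2 : -(x + -y + -z) ≤ u := by rwa [show -(x + -y + -z) = y + z - x by abel]
      have := key_add hX hxny hxnz p1 p2
      rwa [show x - -y - -z = x + (y + z) by abel] at this
    · have p1 : -x + y + z ≤ u := by rwa [show -x + y + z = y + z - x by abel]
      have p2 : -(-x + y + z) ≤ u := by rwa [show -(-x + y + z) = x - (y + z) by abel]
      have := key_add hX hnxy hnxz p1 p2
      rwa [show -x - y - z = -x - (y + z) by abel] at this

lemma ud_smul_unit (hX : IsPreRiesz X) {x y : X} (h : UDisjoint x y) {t : ℝ}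
    (ht0 : 0 ≤ t) (ht1 : t ≤ 1) : UDisjoint x (t • y) := by
  have hxny : UDisjoint x (-y) := ud_neg_right h
  have hnxy : UDisjoint (-x) y := ud_neg_left h
  have hnxny : UDisjoint (-x) (-y) := ud_neg_left hxny
  show upperBounds _ = upperBounds _
  ext u
  rw [mem_ub_pair, mem_ub_pair]
  constructor
  · rintro ⟨ha, hb⟩
    have hb' : -(x + t • y) ≤ u := by rwa [show -(x + t • y) = -x - t • y by module]
    constructor
    · exact key_smul hX h ht0 ht1 ha hb'
    · have p1 : -x + t • -y ≤ u := by rwa [show -x + t • -y = -x - t • y by module]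
      have p2 : -(-x + t • -y) ≤ u := by rwa [show -(-x + t • -y) = x + t • y by module]
      have := key_smul hX hnxny ht0 ht1 p1 p2
      rwa [show -x - t • -y = t • y - x by module] at this
  · rintro ⟨ha, hb⟩
    constructor
    · have p1 : x + t • -y ≤ u := by rwa [show x + t • -y = x - t • y by module]
      have p2 : -(x + t • -y) ≤ u := by rwa [show -(x + t • -y) = t • y - x by module]
      have := key_smul hX hxny ht0 ht1 p1 p2
      rwa [show x - t • -y = x + t • y by module] at this
    · have p1 : -x + t • y ≤ u := by rwa [show -x + t • y = t • y - x by module]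
      have p2 : -(-x + t • y) ≤ u := by rwa [show -(-x + t • y) = x - t • y by module]
      have := key_smul hX hnxy ht0 ht1 p1 p2
      rwa [show -x - t • y = -x - t • y by module] at this

lemma ud_smul_pos (hX : IsPreRiesz X) {x y : X} (h : UDisjoint x y) {t : ℝ}
    (ht : 0 < t) : UDisjoint x (t • y) := by
  rcases le_or_gt t 1 with h1 | h1
  · exact ud_smul_unit hX h ht.le h1
  · have hinv0 : 0 < t⁻¹ := inv_pos.mpr ht
    have hinv1 : t⁻¹ ≤ 1 := by
      rw [inv_le_one_iff₀]
      right; exact h1.le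
    have h0 : UDisjoint y (t⁻¹ • x) := ud_smul_unit hX (ud_symm h) hinv0.le hinv1
    have h2 : UDisjoint (t • y) (t • t⁻¹ • x) := ud_smul_both ht h0
    rw [smul_inv_smul₀ ht.ne'] at h2
    exact ud_symm h2

lemma ud_smul (hX : IsPreRiesz X) {x y : X} (h : UDisjoint x y) (t : ℝ) :
    UDisjoint x (t • y) := by
  rcases lt_trichotomy t 0 with ht | rfl | ht
  · have h0 : UDisjoint x ((-t) • (-y)) := ud_smul_pos hX (ud_neg_right h) (neg_pos.mpr ht)
    rwa [show (-t) • (-y) = t • y by module] at h0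
  · rw [zero_smul]; exact ud_zero x
  · exact ud_smul_pos hX h ht

lemma ud_self_zero (hX : IsPreRiesz X) {w : X} (h : UDisjoint w w) : w = 0 := by
  have h' : upperBounds ({w + w, -w - w} : Set X) = upperBounds ({w - w, w - w} : Set X) := h
  rw [sub_self, Set.pair_eq_singleton, upperBounds_singleton] at h'
  have k1 : (0:X) ≤ -w - w := by
    apply hX ({w + w, -w - w} : Set X) (-w - w) ((Set.finite_singleton _).insert _)
      ⟨_, Set.mem_insert _ _⟩
    intro u' hu'
    have c1 : -w - w + (w + w) ≤ u' := hu' (by rw [Set.image_pair]; exact Set.mem_insert _ _)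
    rw [show -w - w + (w + w) = (0:X) by abel] at c1
    rw [h']
    exact c1
  have k2 : (0:X) ≤ w + w := by
    apply hX ({w + w, -w - w} : Set X) (w + w) ((Set.finite_singleton _).insert _)
      ⟨_, Set.mem_insert _ _⟩
    intro u' hu'
    have c1 : w + w + (-w - w) ≤ u' := hu' (by rw [Set.image_pair]; exact Set.mem_insert_of_mem _ rfl)
    rw [show w + w + (-w - w) = (0:X) by abel] at c1
    rw [h']
    exact c1
  have hww : w + w = 0 := by
    refine le_antisymm ?_ k2
    rw [show -w - w = -(w + w) by abel] at k1
    exact neg_nonneg.mp k1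
  have h2 : (2:ℝ) • w = 0 := by rw [two_smul]; exact hww
  have := congrArg (fun v => ((2:ℝ)⁻¹) • v) h2
  simpa [smul_smul] using this

lemma ud_sum (hX : IsPreRiesz X) {ι : Type*} [DecidableEq ι] {v : X} {s : Finset ι} {f : ι → X}
    (h : ∀ j ∈ s, UDisjoint v (f j)) : UDisjoint v (∑ j ∈ s, f j) := by
  induction s using Finset.induction_on with
  | empty => rw [Finset.sum_empty]; exact ud_zero v
  | insert _ _ hj ih =>
    rw [Finset.sum_insert hj]
    exact ud_add hX (h _ (Finset.mem_insert_self _ _))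
      (ih fun j hj' => h j (Finset.mem_insert_of_mem hj'))

/-- Pairwise disjoint nonzero vectors in a pre-Riesz space are linearly independent. -/
theorem stmt_13 (hX : IsPreRiesz X) {m : ℕ} (x : Fin m → X) (hx : ∀ i, x i ≠ 0)
    (hdisj : ∀ i j, i ≠ j → UDisjoint (x i) (x j)) :
    LinearIndependent ℝ x := by
  rw [Fintype.linearIndependent_iff]
  intro g hg i
  by_contra hgi
  have hud : UDisjoint (x i) (∑ j ∈ Finset.univ.erase i, g j • x j) := by
    apply ud_sum hX
    intro j hj
    exact ud_smul hX (hdisj i j (Finset.ne_of_mem_erase hj).symm) (g j)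
  have hsum : ∑ j ∈ Finset.univ.erase i, g j • x j = -(g i • x i) := by
    have h0 := Finset.add_sum_erase Finset.univ (fun j => g j • x j) (Finset.mem_univ i)
    rw [hg] at h0
    exact eq_neg_of_add_eq_zero_right h0
  rw [hsum] at hud
  have h2 : UDisjoint (-(g i • x i)) ((-(g i)) • x i) := ud_smul hX (ud_symm hud) (-(g i))
  rw [show (-(g i)) • x i = -(g i • x i) by module] at h2
  have h3 : -(g i • x i) = 0 := ud_self_zero hX h2
  have h4 : g i • x i = 0 := neg_eq_zero.mp h3
  have : x i = 0 := by
    have := congrArg (fun v => (g i)⁻¹ • v) h4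
    simpa [smul_smul, inv_mul_cancel₀ hgi] using this
  exact hx i this
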